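/- arXiv:2408.12278 — 2 statements merged into one kernel-verified Lean document; each statement's English description precedes it below -/
import Mathlib

section
/- Let K be a number field such that there exists a prime ideal 𝔓 of the ring of integers O_K lying above 2 with ramification index e(𝔓|2) = 1 and inertia degree f(𝔓|2) = 1. Let a, b ∈ O_K \ {0}, let r and d be positive integers with r odd and d ≥ 2, and set c = 2^d·b − 3^r. Then the Diophantine equation a·x^d − y² − z² + x·y·z − c = 0 has no solution (x₀, y₀, z₀) ∈ O_K³ with 2 ∣ x₀ in O_K. -/
open NumberField

section Aux

open Ideal UniqueFactorizationMonoid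

set_option synthInstance.maxHeartbeats 1000000 in
set_option maxHeartbeats 1000000 in
/-- If `f(P|2) = 1`, then every element of `𝓞 K` is congruent to `0` or `1` mod `P`. -/
lemma aux_residue_two (K : Type*) [Field K] [NumberField K] (P : Ideal (𝓞 K)) (hP : P.IsPrime)
    (h2 : (2 : 𝓞 K) ∈ P)
    (hf : Ideal.inertiaDeg' (Ideal.span {(2 : ℤ)}) P = 1) :
    ∀ t : 𝓞 K, t ∈ P ∨ t - 1 ∈ P := by
  classical
  unfold Ideal.inertiaDeg' at hf
  split_ifs at hf with hc
  letI : Algebra (ℤ ⧸ span {(2:ℤ)}) (𝓞 K ⧸ P) :=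
    Quotient.algebraQuotientOfLEComap (le_of_eq hc.symm)
  haveI hsp : (span {(2:ℤ)}).IsPrime := by
    rw [span_singleton_prime (by norm_num)]; exact Int.prime_two
  haveI : (span {(2:ℤ)}).IsMaximal :=
    IsPrime.to_maximal_ideal (by rw [Ne, span_singleton_eq_bot]; norm_num)
  letI : Field (ℤ ⧸ span {(2:ℤ)}) := Quotient.field _
  haveI : Nontrivial (𝓞 K ⧸ P) := Quotient.nontrivial_iff.mpr hP.ne_top
  have hbt : (⊥ : Subalgebra (ℤ ⧸ span {(2:ℤ)}) (𝓞 K ⧸ P)) = ⊤ :=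
    Subalgebra.bot_eq_top_of_finrank_eq_one hf
  intro t
  have ht : (Ideal.Quotient.mk P t) ∈ (⊥ : Subalgebra (ℤ ⧸ span {(2:ℤ)}) (𝓞 K ⧸ P)) := by
    rw [hbt]; trivial
  rw [Algebra.mem_bot] at ht
  obtain ⟨q, hq⟩ := ht
  obtain ⟨n, rfl⟩ := Ideal.Quotient.mk_surjective q
  have hcomp : (algebraMap (ℤ ⧸ span {(2:ℤ)}) (𝓞 K ⧸ P)).comp
        (Ideal.Quotient.mk (span {(2:ℤ)}))
      = (Ideal.Quotient.mk P).comp (algebraMap ℤ (𝓞 K)) := by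
    apply RingHom.ext_int
  have hmap : algebraMap (ℤ ⧸ span {(2:ℤ)}) (𝓞 K ⧸ P) (Ideal.Quotient.mk _ n)
      = Ideal.Quotient.mk P (algebraMap ℤ (𝓞 K) n) := by
    exact congrFun (congrArg DFunLike.coe hcomp) n
  rw [hmap] at hq
  have hnt : t - algebraMap ℤ (𝓞 K) n ∈ P := by
    rw [← Ideal.Quotient.eq] at *
    exact hq.symm
  rcases Int.even_or_odd n with ⟨m, hm⟩ | ⟨m, hm⟩
  · left
    have hn : algebraMap ℤ (𝓞 K) n ∈ P := by
      have : algebraMap ℤ (𝓞 K) n = 2 * algebraMap ℤ (𝓞 K) m := by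
        rw [hm]; push_cast [map_add]; ring
      rw [this]; exact P.mul_mem_right _ h2
    have := P.add_mem hnt hn
    simpa using this
  · right
    have hn : algebraMap ℤ (𝓞 K) n - 1 ∈ P := by
      have : algebraMap ℤ (𝓞 K) n - 1 = 2 * algebraMap ℤ (𝓞 K) m := by
        rw [hm, map_add, _root_.map_mul, map_one, map_ofNat]
        ring
      rw [this]; exact P.mul_mem_right _ h2
    have := P.add_mem hnt hn
    simpa using this

/-- If `e(P|2) = 1`, then `2 ∉ P ^ 2`. -/
lemma aux_two_not_in_sq (K : Type*) [Field K] [NumberField K] (P : Ideal (𝓞 K)) (hP : P.IsPrime)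
    (h2 : (2 : 𝓞 K) ∈ P)
    (he : Ideal.ramificationIdx' (Ideal.span {(2 : ℤ)}) P = 1) :
    (2 : 𝓞 K) ∉ P ^ 2 := by
  classical
  intro hmem
  have h2ne : (2 : 𝓞 K) ≠ 0 := by norm_num
  have hmapspan : Ideal.map (algebraMap ℤ (𝓞 K)) (span {(2:ℤ)}) = span {(2 : 𝓞 K)} := by
    rw [Ideal.map_span]; simp
  have hPbot : P ≠ ⊥ := fun h => h2ne (by simpa [h] using h2)
  have hmapbot : Ideal.map (algebraMap ℤ (𝓞 K)) (span {(2:ℤ)}) ≠ ⊥ := by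
    rw [hmapspan, Ne, span_singleton_eq_bot]; exact h2ne
  have hle2 : Ideal.map (algebraMap ℤ (𝓞 K)) (span {(2:ℤ)}) ≤ P ^ 2 := by
    rw [hmapspan, span_le]; simpa using hmem
  have hcount := Ideal.IsDedekindDomain.ramificationIdx'_eq_normalizedFactors_count
    (p := span {(2:ℤ)}) hmapbot hP hPbot
  rw [he] at hcount
  have hPirr := (Ideal.prime_of_isPrime hPbot hP).irreducible
  have hdvd : P ^ 2 ∣ Ideal.map (algebraMap ℤ (𝓞 K)) (span {(2:ℤ)}) :=
    Ideal.dvd_iff_le.mpr hle2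
  rw [dvd_iff_normalizedFactors_le_normalizedFactors (pow_ne_zero _ hPbot) hmapbot,
    normalizedFactors_pow, normalizedFactors_irreducible hPirr, normalize_eq,
    Multiset.nsmul_singleton, ← Multiset.le_count_iff_replicate_le] at hdvd
  omega

end Aux

/-- If `K` is a number field admitting a prime ideal `𝔓` above `2` with
`e(𝔓|2) = f(𝔓|2) = 1`, `a, b ∈ 𝓞 K \ {0}`, `r` odd, `d ≥ 2`, and `c = 2^d b - 3^r`, then
`a x^d - y² - z² + xyz - c = 0` has no solution in `𝓞 K` with `2 ∣ x`. -/
theorem stmt_0 (K : Type*) [Field K] [NumberField K]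
    (hprime : ∃ P : Ideal (𝓞 K), P.IsPrime ∧ (2 : 𝓞 K) ∈ P ∧
      Ideal.ramificationIdx' (Ideal.span {(2 : ℤ)}) P = 1 ∧
      Ideal.inertiaDeg' (Ideal.span {(2 : ℤ)}) P = 1)
    (a b : 𝓞 K) (ha : a ≠ 0) (hb : b ≠ 0)
    (r d : ℕ) (hr : 0 < r) (hrodd : Odd r) (hd : 2 ≤ d)
    (c : 𝓞 K) (hc : c = 2 ^ d * b - 3 ^ r) :
    ¬ ∃ x y z : 𝓞 K, 2 ∣ x ∧ a * x ^ d - y ^ 2 - z ^ 2 + x * y * z - c = 0 := by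
  rintro ⟨x, y, z, ⟨u, hu⟩, heq⟩
  obtain ⟨P, hP, h2P, he, hf⟩ := hprime
  have hres := aux_residue_two K P hP h2P hf
  have hP2 := aux_two_not_in_sq K P hP h2P he
  have hone : (1 : 𝓞 K) ∉ P := fun h => hP.ne_top ((Ideal.eq_top_iff_one P).mpr h)
  have hle : P ^ 2 ≤ P := Ideal.pow_le_self (by norm_num)
  have hxP : x ∈ P := by rw [hu]; exact P.mul_mem_right u h2P
  have h4mem : (2 : 𝓞 K) ^ 2 ∈ P ^ 2 := Ideal.pow_mem_pow h2P 2
  have h2d : (2 : 𝓞 K) ^ d ∈ P ^ 2 := by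
    have : (2 : 𝓞 K) ^ d = 2 ^ 2 * 2 ^ (d - 2) := by
      rw [← pow_add]; congr 1; omega
    rw [this]; exact Ideal.mul_mem_right _ _ h4mem
  have hxd : x ^ d ∈ P ^ 2 := by
    rw [hu, mul_pow]; exact Ideal.mul_mem_right _ _ h2d
  have h3r : (3 : 𝓞 K) ^ r - 3 ∈ P ^ 2 := by
    obtain ⟨k, hk⟩ := hrodd
    obtain ⟨s, hs⟩ := sub_dvd_pow_sub_pow (9 : 𝓞 K) 1 k
    have h9 : (3 : 𝓞 K) ^ r - 3 = 2 ^ 2 * (6 * s) := by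
      rw [hk, pow_add, pow_mul]
      norm_num at hs ⊢
      linear_combination (3 : 𝓞 K) * hs
    rw [h9]; exact Ideal.mul_mem_right _ _ h4mem
  have hkey : y ^ 2 + z ^ 2 - x * y * z - (3 : 𝓞 K) ^ r ∈ P ^ 2 := by
    have h : y ^ 2 + z ^ 2 - x * y * z - (3 : 𝓞 K) ^ r = a * x ^ d - 2 ^ d * b := by
      linear_combination -heq - hc
    rw [h]
    exact Ideal.sub_mem _ (Ideal.mul_mem_left _ a hxd) (Ideal.mul_mem_right b _ h2d)
  have hkey3 : y ^ 2 + z ^ 2 - x * y * z - 3 ∈ P ^ 2 := by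
    have h : y ^ 2 + z ^ 2 - x * y * z - 3
        = (y ^ 2 + z ^ 2 - x * y * z - 3 ^ r) + ((3 : 𝓞 K) ^ r - 3) := by ring
    rw [h]; exact Ideal.add_mem _ hkey h3r
  have hsq : ∀ w : 𝓞 K, w - 1 ∈ P → w ^ 2 - 1 ∈ P ^ 2 := by
    intro w hw
    have hw1 : w + 1 ∈ P := by
      have h := P.add_mem hw h2P
      have e : w + 1 = w - 1 + 2 := by ring
      rwa [e]
    have e : w ^ 2 - 1 = (w - 1) * (w + 1) := by ring
    rw [e, pow_two]
    exact Ideal.mul_mem_mul hw hw1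
  have hmulP2 : ∀ w : 𝓞 K, w ∈ P → x * w ∈ P ^ 2 := by
    intro w hw
    rw [pow_two]; exact Ideal.mul_mem_mul hxP hw
  rcases hres y with hy | hy <;> rcases hres z with hz | hz
  · -- y ∈ P, z ∈ P : 3 ∈ P², so 1 = 3 - 2 ∈ P
    have hxyz : x * y * z ∈ P ^ 2 := Ideal.mul_mem_right z _ (hmulP2 y hy)
    have h3in : (3 : 𝓞 K) ∈ P ^ 2 := by
      have e : (3 : 𝓞 K) = y ^ 2 + z ^ 2 - x * y * z - (y ^ 2 + z ^ 2 - x * y * z - 3) := by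
        ring
      rw [e]
      exact Ideal.sub_mem _ (Ideal.sub_mem _ (Ideal.add_mem _ (Ideal.pow_mem_pow hy 2)
        (Ideal.pow_mem_pow hz 2)) hxyz) hkey3
    exact hone (by have := P.sub_mem (hle h3in) h2P; norm_num at this; exact this)
  · -- y ∈ P, z - 1 ∈ P : 2 ∈ P²
    have hxyz : x * y * z ∈ P ^ 2 := Ideal.mul_mem_right z _ (hmulP2 y hy)
    apply hP2
    have e : (2 : 𝓞 K) = y ^ 2 + (z ^ 2 - 1) - x * y * z
        - (y ^ 2 + z ^ 2 - x * y * z - 3) := by ring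
    rw [e]
    exact Ideal.sub_mem _ (Ideal.sub_mem _ (Ideal.add_mem _ (Ideal.pow_mem_pow hy 2)
      (hsq z hz)) hxyz) hkey3
  · -- y - 1 ∈ P, z ∈ P : 2 ∈ P²
    have hxyz : x * y * z ∈ P ^ 2 := by
      have : x * y * z = x * (y * z) := by ring
      rw [this]; exact hmulP2 _ (P.mul_mem_left y hz)
    apply hP2
    have e : (2 : 𝓞 K) = (y ^ 2 - 1) + z ^ 2 - x * y * z
        - (y ^ 2 + z ^ 2 - x * y * z - 3) := by ring
    rw [e]
    exact Ideal.sub_mem _ (Ideal.sub_mem _ (Ideal.add_mem _ (hsq y hy)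
      (Ideal.pow_mem_pow hz 2)) hxyz) hkey3
  · -- y - 1 ∈ P, z - 1 ∈ P : 1 ∈ P
    apply hone
    have e : (1 : 𝓞 K) = (y ^ 2 - 1) + (z ^ 2 - 1) - x * y * z
        - (y ^ 2 + z ^ 2 - x * y * z - 3) - 2 + 2 := by ring
    rw [e]
    have hxyz : x * y * z ∈ P := P.mul_mem_right z (P.mul_mem_right y hxP)
    exact P.add_mem (P.sub_mem (P.sub_mem (P.sub_mem (P.add_mem (hle (hsq y hy))
      (hle (hsq z hz))) hxyz) (hle hkey3)) h2P) h2P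
end

section
/- Let K be a number field such that there exists a prime ideal 𝔓 of the ring of integers O_K lying above 2 with ramification index e(𝔓|2) = 1 and inertia degree f(𝔓|2) = 1. Let α ∈ O_K be an element that is not a root of the polynomial x⁸ + 5x⁶ − 432x⁴ − 5184x² − 15552, and let E_α be the curve over K given by the Weierstrass equation y² − α·x·y = x³ − (α² + 5). Then E_α has no integral point: there is no pair (x₀, y₀) ∈ O_K² with 2 ∣ x₀ in O_K such that y₀² − α·x₀·y₀ = x₀³ − (α² + 5). -/
open NumberField

set_option maxHeartbeats 1000000 in
set_option synthInstance.maxHeartbeats 400000 in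
/-- If `K` is a number field admitting a prime ideal above `2` with
`e = f = 1` and `α ∈ 𝓞 K` is not a root of `x⁸ + 5x⁶ - 432x⁴ - 5184x² - 15552`, then the
curve `E_α : y² - αxy = x³ - (α² + 5)` has no integral point `(x₀, y₀) ∈ 𝓞 K²` with
`2 ∣ x₀`. -/
theorem stmt_12 (K : Type*) [Field K] [NumberField K]
    (hprime : ∃ P : Ideal (𝓞 K), P.IsPrime ∧ (2 : 𝓞 K) ∈ P ∧
      Ideal.ramificationIdx' (Ideal.span {(2 : ℤ)}) P = 1 ∧
      Ideal.inertiaDeg' (Ideal.span {(2 : ℤ)}) P = 1)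
    (α : 𝓞 K)
    (hα : α ^ 8 + 5 * α ^ 6 - 432 * α ^ 4 - 5184 * α ^ 2 - 15552 ≠ 0) :
    ¬ ∃ x y : 𝓞 K, 2 ∣ x ∧ y ^ 2 - α * x * y = x ^ 3 - (α ^ 2 + 5) := by
  obtain ⟨P, hP, h2P, he, hf⟩ := hprime
  rintro ⟨x, y, ⟨u, rfl⟩, heq⟩
  -- P is not ⊥
  have hPbot : P ≠ ⊥ := by
    intro h
    rw [h, Ideal.mem_bot] at h2P
    exact two_ne_zero h2P
  -- 2 ∉ P ^ 2  (from ramification index = 1)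
  have h2ne : (2 : 𝓞 K) ∉ P ^ 2 := by
    intro hmem
    have hle : Ideal.map (algebraMap ℤ (𝓞 K)) (Ideal.span {(2 : ℤ)}) ≤ P ^ 2 := by
      rw [Ideal.map_span, Set.image_singleton, map_ofNat, Ideal.span_singleton_le_iff_mem]
      exact hmem
    have hsup : sSup {n : ℕ | Ideal.map (algebraMap ℤ (𝓞 K)) (Ideal.span {(2 : ℤ)}) ≤ P ^ n}
        = 1 := he
    by_cases hb : BddAbove {n : ℕ |
        Ideal.map (algebraMap ℤ (𝓞 K)) (Ideal.span {(2 : ℤ)}) ≤ P ^ n}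
    · have h2le := le_csSup hb (show (2 : ℕ) ∈ _ from hle)
      rw [hsup] at h2le
      omega
    · rw [csSup_of_not_bddAbove hb, csSup_empty] at hsup
      exact absurd hsup (by norm_num)
  -- the ideal (2) in ℤ is maximal and is the comap of P
  have hmax : (Ideal.span {(2 : ℤ)}).IsMaximal :=
    PrincipalIdealRing.isMaximal_of_irreducible Int.prime_two.irreducible
  have hcne : Ideal.comap (algebraMap ℤ (𝓞 K)) P ≠ ⊤ := by
    intro h
    apply hP.ne_top
    rw [Ideal.eq_top_iff_one] at h ⊢
    simpa using h
  have hcle : Ideal.span {(2 : ℤ)} ≤ Ideal.comap (algebraMap ℤ (𝓞 K)) P := by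
    rw [Ideal.span_singleton_le_iff_mem, Ideal.mem_comap, map_ofNat]
    exact h2P
  have hc : Ideal.comap (algebraMap ℤ (𝓞 K)) P = Ideal.span {(2 : ℤ)} :=
    (hmax.eq_of_le hcne hcle).symm
  -- extract the finrank statement from the inertia degree hypothesis
  unfold Ideal.inertiaDeg' at hf
  rw [dif_pos hc] at hf
  -- set up instances
  letI algInst : Algebra (ℤ ⧸ Ideal.span {(2 : ℤ)}) (𝓞 K ⧸ P) :=
    Ideal.Quotient.algebraQuotientOfLEComap (le_of_eq hc.symm)
  haveI : (Ideal.span {(2 : ℤ)}).IsMaximal := hmax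
  have e2 : (ℤ ⧸ Ideal.span {(2 : ℤ)}) ≃+* ZMod 2 :=
    (Ideal.quotEquivOfEq (by norm_num :
        Ideal.span {(2 : ℤ)} = Ideal.span {((2 : ℕ) : ℤ)})).trans
      (Int.quotientSpanNatEquivZMod 2)
  haveI : Fintype (ℤ ⧸ Ideal.span {(2 : ℤ)}) := Fintype.ofEquiv (ZMod 2) e2.symm.toEquiv
  haveI fF : Fintype (𝓞 K ⧸ P) := @Fintype.ofFinite _ (Ideal.finiteQuotientOfFreeOfNeBot P hPbot)
  have cardk : Fintype.card (ℤ ⧸ Ideal.span {(2 : ℤ)}) = 2 := by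
    rw [Fintype.card_congr e2.toEquiv]
    simp
  letI : Field (ℤ ⧸ Ideal.span {(2 : ℤ)}) := Ideal.Quotient.field _
  -- card of residue field is 2
  have cardF : Nat.card (𝓞 K ⧸ P) = 2 := by
    rw [Nat.card_eq_fintype_card, Module.card_eq_pow_finrank (K := ℤ ⧸ Ideal.span {(2 : ℤ)})
      (V := 𝓞 K ⧸ P), hf, cardk, pow_one]
  -- absNorm of P² is 4
  have hnorm : Ideal.absNorm P = 2 := by
    rw [Ideal.absNorm_apply, Submodule.cardQuot_apply, cardF]
  have cardR4 : Nat.card (𝓞 K ⧸ P ^ 2) = 4 := by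
    have : Ideal.absNorm (P ^ 2) = 4 := by
      rw [map_pow, hnorm]; norm_num
    rwa [Ideal.absNorm_apply, Submodule.cardQuot_apply] at this
  -- the quotient ring R4 := 𝓞 K ⧸ P ^ 2
  haveI : Nontrivial (𝓞 K ⧸ P ^ 2) := by
    refine Ideal.Quotient.nontrivial_iff.mpr ?_
    intro h
    apply hP.ne_top
    rw [Ideal.eq_top_iff_one] at h ⊢
    exact (Ideal.pow_le_self (by norm_num)) h
  have four_eq : ((4 : ℕ) : 𝓞 K ⧸ P ^ 2) = 0 := by
    rw [← map_natCast (Ideal.Quotient.mk (P ^ 2)) 4, Ideal.Quotient.eq_zero_iff_mem]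
    have : ((4 : ℕ) : 𝓞 K) = 2 * 2 := by norm_num
    rw [this, pow_two]
    exact Ideal.mul_mem_mul h2P h2P
  have two_ne : ((2 : ℕ) : 𝓞 K ⧸ P ^ 2) ≠ 0 := by
    rw [Ne, ← map_natCast (Ideal.Quotient.mk (P ^ 2)) 2, Ideal.Quotient.eq_zero_iff_mem]
    simpa using h2ne
  have hchar : ringChar (𝓞 K ⧸ P ^ 2) = 4 := by
    have hdvd : ringChar (𝓞 K ⧸ P ^ 2) ∣ 4 := ringChar.dvd four_eq
    have hle4 : ringChar (𝓞 K ⧸ P ^ 2) ≤ 4 := Nat.le_of_dvd (by norm_num) hdvd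
    interval_cases h : ringChar (𝓞 K ⧸ P ^ 2)
    · exact absurd hdvd (by norm_num)
    · have h1 : ((1 : ℕ) : 𝓞 K ⧸ P ^ 2) = 0 := (ringChar.spec _ 1).2 (by rw [h])
      rw [Nat.cast_one] at h1
      exact (one_ne_zero h1).elim
    · exact absurd ((ringChar.spec (𝓞 K ⧸ P ^ 2) 2).2 (by rw [h])) two_ne
    · exact absurd hdvd (by norm_num)
    · rfl
  haveI : CharP (𝓞 K ⧸ P ^ 2) 4 := ringChar.of_eq hchar
  haveI fR4 : Fintype (𝓞 K ⧸ P ^ 2) := @Fintype.ofFinite _ (Ideal.finiteQuotientOfFreeOfNeBot _ (pow_ne_zero 2 hPbot))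
  have hcard4 : Fintype.card (𝓞 K ⧸ P ^ 2) = 4 := by rw [← Nat.card_eq_fintype_card, cardR4]
  have hbij : Function.Bijective (ZMod.castHom (dvd_refl 4) (𝓞 K ⧸ P ^ 2)) :=
    ZMod.castHom_bijective _ hcard4
  let e : ZMod 4 ≃+* (𝓞 K ⧸ P ^ 2) := RingEquiv.ofBijective _ hbij
  let φ : 𝓞 K →+* ZMod 4 := e.symm.toRingHom.comp (Ideal.Quotient.mk (P ^ 2))
  have key : ∀ A U Y : ZMod 4, Y ^ 2 - A * (2 * U) * Y ≠ (2 * U) ^ 3 - (A ^ 2 + 5) := by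
    decide
  apply key (φ α) (φ u) (φ y)
  have := congrArg φ heq
  simpa only [map_sub, map_mul, map_pow, map_add, map_ofNat] using this
end
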